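/- Let (F,G): A → B be an adjoint pair between locally small bicomplete abelian categories and (φ,ψ): Pr(A) → Pr(B) the induced Galois connection. If τ ∈ Pr(A) is idempotent then φ(τ) is idempotent, and if σ ∈ Pr(B) is a radical then ψ(σ) is a radical. -/

import Mathlib

open CategoryTheory CategoryTheory.Limits

universe u

/-- The product `τ·σ` of preradicals, represented by `σ ∘ τS : TS ⟶ 1`. -/
noncomputable def preradProd {C : Type u} [Category.{u} C] [Abelian C]
    (τ σ : Subobject (𝟭 C)) : Subobject (𝟭 C) :=
  imageSubobject
    ((Functor.whiskerLeft (σ : C ⥤ C) τ.arrow ≫ σ.arrow :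
      (σ : C ⥤ C) ⋙ (τ : C ⥤ C) ⟶ 𝟭 C))

/-- The coproduct `(σ:τ)` of preradicals: `Ker(1 ⟶ S* ⟶ T*S*)`. -/
noncomputable def preradCoprod {C : Type u} [Category.{u} C] [Abelian C]
    (σ τ : Subobject (𝟭 C)) : Subobject (𝟭 C) :=
  kernelSubobject
    (cokernel.π σ.arrow ≫ Functor.whiskerLeft (cokernel σ.arrow) (cokernel.π τ.arrow) :
      𝟭 C ⟶ cokernel σ.arrow ⋙ cokernel τ.arrow)

variable {A : Type u} [Category.{u} A] [Abelian A] [HasLimits A] [HasColimits A]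
  [WellPowered (A ⥤ A)]
variable {B : Type u} [Category.{u} B] [Abelian B] [HasLimits B] [HasColimits B]
  [WellPowered (B ⥤ B)]
variable (F : A ⥤ B) (G : B ⥤ A) (adj : F ⊣ G)

/-- `φ(τ) = Im(ε ∘ FτG)`. -/
noncomputable def preradPhi (τ : Subobject (𝟭 A)) : Subobject (𝟭 B) :=
  imageSubobject
    ((Functor.whiskerRight (Functor.whiskerLeft G τ.arrow) F ≫ adj.counit :
      (G ⋙ (τ : A ⥤ A)) ⋙ F ⟶ 𝟭 B))

/-- `ψ(σ) = Ker(Gσ*F ∘ η)`. -/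
noncomputable def preradPsi (σ : Subobject (𝟭 B)) : Subobject (𝟭 A) :=
  kernelSubobject
    ((adj.unit ≫ Functor.whiskerRight (Functor.whiskerLeft F (cokernel.π σ.arrow)) G :
      𝟭 A ⟶ (F ⋙ cokernel σ.arrow) ⋙ G))

section AuxAb
variable {C : Type*} [Category C] [Abelian C]

lemma img_eq_of_epi {X Y Z : C} (f : X ⟶ Y) (g : Y ⟶ Z) [Epi f] [Mono g] :
    imageSubobject (f ≫ g) = Subobject.mk g := by
  haveI : StrongEpi f := strongEpi_of_epi f
  show Subobject.mk (image.ι (f ≫ g)) = Subobject.mk g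
  exact Subobject.mk_eq_mk_of_comm _ _ ((image.isoStrongEpiMono f g rfl).symm)
    (image.isoStrongEpiMono_inv_comp_mono f g rfl)

lemma epi_of_img_eq {X Y Z : C} (f : X ⟶ Y) (g : Y ⟶ Z) [Mono g]
    (h : imageSubobject (f ≫ g) = Subobject.mk g) : Epi f := by
  have h2 : f = factorThruImageSubobject (f ≫ g) ≫ (Subobject.isoOfEqMk _ g h).hom := by
    rw [← cancel_mono g]
    simp [Subobject.isoOfEqMk, Subobject.ofLEMk_comp, imageSubobject_arrow_comp]
  rw [h2]
  exact epi_comp _ _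

lemma mono_of_ker_eq {X Y Z : C} (f : X ⟶ Y) (g : Y ⟶ Z) [Epi f]
    (h : kernelSubobject (f ≫ g) = kernelSubobject f) : Mono g := by
  apply Preadditive.mono_of_kernel_zero
  have w : pullback.fst f (kernel.ι g) ≫ (f ≫ g) = 0 := by
    rw [← Category.assoc, pullback.condition, Category.assoc, kernel.condition, comp_zero]
  have h1 : pullback.fst f (kernel.ι g) ≫ f = 0 := by
    have e1 : pullback.fst f (kernel.ι g) = factorThruKernelSubobject (f ≫ g) _ w ≫
        Subobject.ofLE _ _ h.le ≫ (kernelSubobject f).arrow := by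
      rw [Subobject.ofLE_arrow h.le, factorThruKernelSubobject_comp_arrow]
    rw [e1, Category.assoc, Category.assoc, kernelSubobject_arrow_comp, comp_zero, comp_zero]
  have h2 : pullback.snd f (kernel.ι g) ≫ kernel.ι g = pullback.snd f (kernel.ι g) ≫ 0 := by
    rw [← pullback.condition, h1, comp_zero]
  exact (cancel_epi _).mp h2

lemma ker_cokernelπ_eq {X Y : C} (s : X ⟶ Y) [Mono s] :
    kernelSubobject (cokernel.π s) = Subobject.mk s := by
  apply le_antisymm
  · exact Subobject.le_mk_of_comm
      (Abelian.monoLift s (kernelSubobject (cokernel.π s)).arrow (kernelSubobject_arrow_comp _))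
      (Abelian.monoLift_comp _ _ _)
  · apply le_kernelSubobject
    rw [← Subobject.underlyingIso_hom_comp_eq_mk, Category.assoc, cokernel.condition, comp_zero]

end AuxAb

theorem phiIdem (τ : Subobject (𝟭 A)) (hτ : preradProd τ τ = τ) :
    preradProd (preradPhi F G adj τ) (preradPhi F G adj τ) = preradPhi F G adj τ := by
  -- notation
  set T : A ⥤ A := (τ : A ⥤ A) with hT
  have t := τ.arrow
  -- hypothesis gives that `Functor.whiskerLeft T τ.arrow` is epi
  haveI hE : Epi (Functor.whiskerLeft T τ.arrow) := by
    apply epi_of_img_eq (Functor.whiskerLeft T τ.arrow) τ.arrow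
    show preradProd τ τ = Subobject.mk τ.arrow
    rw [Subobject.mk_arrow]; exact hτ
  -- the defining map of φτ
  let q : (G ⋙ T) ⋙ F ⟶ 𝟭 B := Functor.whiskerRight (Functor.whiskerLeft G τ.arrow) F ≫ adj.counit
  have hPhi : preradPhi F G adj τ = imageSubobject q := rfl
  let Φ : B ⥤ B := (preradPhi F G adj τ : B ⥤ B)
  let p : Φ ⟶ 𝟭 B := (preradPhi F G adj τ).arrow
  let e : (G ⋙ T) ⋙ F ⟶ Φ := factorThruImageSubobject q
  have hep : e ≫ p = q := imageSubobject_arrow_comp q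
  haveI hEe : Epi e := by
    show Epi (factorThruImageSubobject q); infer_instance
  -- transpose of e
  let et : (G ⋙ T) ⟶ Φ ⋙ G := Functor.whiskerLeft (G ⋙ T) adj.unit ≫ Functor.whiskerRight e G
  -- key equation
  have key : Functor.whiskerRight et (T ⋙ F) ≫ Functor.whiskerLeft Φ q
      = (Functor.whiskerRight (Functor.whiskerLeft (G ⋙ T) τ.arrow) F ≫ e :
          ((G ⋙ T) ⋙ T) ⋙ F ⟶ Φ) := by
    ext M
    dsimp [et, q]
    have n1 : T.map (adj.unit.app (T.obj (G.obj M)) ≫ G.map (e.app M)) ≫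
        τ.arrow.app (G.obj (Φ.obj M))
        = τ.arrow.app (T.obj (G.obj M)) ≫ adj.unit.app (T.obj (G.obj M)) ≫ G.map (e.app M) := by
      rw [τ.arrow.naturality]; simp
    rw [← Functor.map_comp_assoc, n1]
    simp
  -- epimorphy transfer
  haveI : F.PreservesEpimorphisms := Functor.preservesEpimorphisms_of_adjunction adj
  haveI : ∀ M, Epi ((Functor.whiskerLeft (G ⋙ T) τ.arrow).app M) :=
    fun M => inferInstanceAs (Epi ((Functor.whiskerLeft T τ.arrow).app (G.obj M)))
  haveI : Epi (Functor.whiskerLeft (G ⋙ T) τ.arrow) := NatTrans.epi_of_epi_app _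
  haveI h3 : Epi (Functor.whiskerRight et (T ⋙ F) ≫ Functor.whiskerLeft Φ q) := by
    rw [key]; exact epi_comp _ _
  haveI h4 : Epi (Functor.whiskerLeft Φ q) := epi_of_epi (Functor.whiskerRight et (T ⋙ F)) _
  haveI h5 : Epi (Functor.whiskerLeft Φ p) := by
    rw [← hep] at h4
    rw [Functor.whiskerLeft_comp] at h4
    exact epi_of_epi (Functor.whiskerLeft Φ e) _
  -- conclude
  show imageSubobject (Functor.whiskerLeft Φ p ≫ p) = preradPhi F G adj τ
  rw [img_eq_of_epi (Functor.whiskerLeft Φ p) p, Subobject.mk_arrow]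

theorem psiRad (σ : Subobject (𝟭 B)) (hσ : preradCoprod σ σ = σ) :
    preradCoprod (preradPsi F G adj σ) (preradPsi F G adj σ) = preradPsi F G adj σ := by
  set Cs : B ⥤ B := cokernel σ.arrow with hCs
  haveI hM : Mono (Functor.whiskerLeft Cs (cokernel.π σ.arrow)) := by
    apply mono_of_ker_eq (cokernel.π σ.arrow) (Functor.whiskerLeft Cs (cokernel.π σ.arrow))
    rw [ker_cokernelπ_eq σ.arrow, Subobject.mk_arrow]
    exact hσ
  let r : 𝟭 A ⟶ (F ⋙ Cs) ⋙ G := adj.unit ≫ Functor.whiskerRight (Functor.whiskerLeft F (cokernel.π σ.arrow)) G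
  have hPsi : preradPsi F G adj σ = kernelSubobject r := rfl
  let Ψ : A ⥤ A := (preradPsi F G adj σ : A ⥤ A)
  let Q : A ⥤ A := cokernel (preradPsi F G adj σ).arrow
  let c : 𝟭 A ⟶ Q := cokernel.π (preradPsi F G adj σ).arrow
  have hkr : (preradPsi F G adj σ).arrow ≫ r = 0 := kernelSubobject_arrow_comp r
  let m : Q ⟶ (F ⋙ Cs) ⋙ G := cokernel.desc (preradPsi F G adj σ).arrow r hkr
  have hcm : c ≫ m = r := cokernel.π_desc (preradPsi F G adj σ).arrow r hkr
  haveI hMm : Mono m := by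
    apply mono_of_ker_eq c m
    rw [hcm]
    show kernelSubobject r = kernelSubobject (cokernel.π (preradPsi F G adj σ).arrow)
    rw [ker_cokernelπ_eq (preradPsi F G adj σ).arrow, Subobject.mk_arrow]
    exact hPsi.symm
  -- mono of the whiskered cokernel map
  haveI : G.PreservesMonomorphisms := Functor.preservesMonomorphisms_of_adjunction adj
  haveI : ∀ X, Mono ((Functor.whiskerLeft (F ⋙ Cs) (cokernel.π σ.arrow)).app X) :=
    fun X => inferInstanceAs (Mono ((Functor.whiskerLeft Cs (cokernel.π σ.arrow)).app (F.obj X)))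
  haveI : Mono (Functor.whiskerLeft (F ⋙ Cs) (cokernel.π σ.arrow)) := NatTrans.mono_of_mono_app _
  haveI : Mono (Functor.whiskerRight (Functor.whiskerLeft (F ⋙ Cs) (cokernel.π σ.arrow)) G) := by
    infer_instance
  -- transpose of m
  let mt : Q ⋙ F ⟶ F ⋙ Cs := Functor.whiskerRight m F ≫ Functor.whiskerLeft (F ⋙ Cs) adj.counit
  -- key equation
  have key : Functor.whiskerLeft Q r ≫ Functor.whiskerRight mt (Cs ⋙ G)
      = (m ≫ Functor.whiskerRight (Functor.whiskerLeft (F ⋙ Cs) (cokernel.π σ.arrow)) G :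
          Q ⟶ ((F ⋙ Cs) ⋙ Cs) ⋙ G) := by
    ext X
    dsimp [mt, r]
    have n1 : (cokernel.π σ.arrow).app (F.obj (Q.obj X)) ≫
        Cs.map (F.map (m.app X) ≫ adj.counit.app (Cs.obj (F.obj X)))
        = (F.map (m.app X) ≫ adj.counit.app (Cs.obj (F.obj X))) ≫
          (cokernel.π σ.arrow).app (Cs.obj (F.obj X)) := by
      rw [← (cokernel.π σ.arrow).naturality]; simp
    simp only [Category.assoc]
    rw [← Functor.map_comp, n1]
    simp
  haveI h1 : Mono (Functor.whiskerLeft Q r ≫ Functor.whiskerRight mt (Cs ⋙ G)) := by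
    rw [key]; exact mono_comp _ _
  haveI h2 : Mono (Functor.whiskerLeft Q r) := mono_of_mono _ (Functor.whiskerRight mt (Cs ⋙ G))
  haveI h3 : Mono (Functor.whiskerLeft Q c) := by
    rw [← hcm, Functor.whiskerLeft_comp] at h2
    exact mono_of_mono _ (Functor.whiskerLeft Q m)
  show kernelSubobject (c ≫ Functor.whiskerLeft Q c) = preradPsi F G adj σ
  rw [kernelSubobject_comp_mono, ker_cokernelπ_eq, Subobject.mk_arrow]

/-- In the Galois connection induced by an adjoint pair between locally small
bicomplete abelian categories, `φ` preserves idempotent preradicals and `ψ`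
preserves radicals. -/
theorem preradPhi_idempotent_and_preradPsi_radical
    (τ : Subobject (𝟭 A)) (σ : Subobject (𝟭 B)) :
    (preradProd τ τ = τ →
      preradProd (preradPhi F G adj τ) (preradPhi F G adj τ) = preradPhi F G adj τ) ∧
    (preradCoprod σ σ = σ →
      preradCoprod (preradPsi F G adj σ) (preradPsi F G adj σ) = preradPsi F G adj σ) :=
  ⟨fun h => phiIdem F G adj τ h, fun h => psiRad F G adj σ h⟩
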